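/- Let A be a complex n×n matrix all of whose eigenvalues have negative real part, and let r_c(A) = inf_{ω∈ℝ} σ_min(iωI − A), where σ_min denotes the smallest singular value. Then there exists a complex n×n matrix B with ‖B‖ = r_c(A) such that A + B has an eigenvalue with nonnegative real part (i.e. ẋ = (A+B)x is not asymptotically stable). -/

import Mathlib

open Matrix

/-- The operator 2-norm of a complex `n × n` matrix. -/
noncomputable def opNormC {n : ℕ} (A : Matrix (Fin n) (Fin n) ℂ) : ℝ :=
  ‖Matrix.toEuclideanCLM (𝕜 := ℂ) A‖

/-- The smallest singular value of a complex `n × n` matrix: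
the infimum of `‖A x‖` over unit vectors `x`. -/
noncomputable def sMin {n : ℕ} (A : Matrix (Fin n) (Fin n) ℂ) : ℝ :=
  ⨅ x : {x : EuclideanSpace ℂ (Fin n) // ‖x‖ = 1},
    ‖Matrix.toEuclideanCLM (𝕜 := ℂ) A (x : EuclideanSpace ℂ (Fin n))‖

/-- The complex stability radius `r_c(A) = inf_{ω ∈ ℝ} σ_min(iω I − A)`. -/
noncomputable def stabRadius {n : ℕ} (A : Matrix (Fin n) (Fin n) ℂ) : ℝ :=
  ⨅ ω : ℝ, sMin ((Complex.I * (ω : ℂ)) • (1 : Matrix (Fin n) (Fin n) ℂ) - A)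

section aux

variable {n : ℕ}

private lemma sphere_nonempty' (hn : 0 < n) :
    Nonempty {x : EuclideanSpace ℂ (Fin n) // ‖x‖ = 1} :=
  ⟨⟨EuclideanSpace.single ⟨0, hn⟩ 1, by simp [EuclideanSpace.norm_single]⟩⟩

private lemma sMin_bddBelow (M : Matrix (Fin n) (Fin n) ℂ) :
    BddBelow (Set.range fun x : {x : EuclideanSpace ℂ (Fin n) // ‖x‖ = 1} =>
      ‖Matrix.toEuclideanCLM (𝕜 := ℂ) M (x : EuclideanSpace ℂ (Fin n))‖) := by
  exact ⟨0, by rintro _ ⟨x, rfl⟩; exact norm_nonneg _⟩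

private lemma sMin_le (M : Matrix (Fin n) (Fin n) ℂ) {x : EuclideanSpace ℂ (Fin n)}
    (hx : ‖x‖ = 1) : sMin M ≤ ‖Matrix.toEuclideanCLM (𝕜 := ℂ) M x‖ :=
  ciInf_le (sMin_bddBelow M) ⟨x, hx⟩

private lemma sMin_nonneg (M : Matrix (Fin n) (Fin n) ℂ) : 0 ≤ sMin M :=
  Real.iInf_nonneg fun _ => norm_nonneg _

private lemma exists_sMin (hn : 0 < n) (M : Matrix (Fin n) (Fin n) ℂ) :
    ∃ x : EuclideanSpace ℂ (Fin n), ‖x‖ = 1 ∧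
      ‖Matrix.toEuclideanCLM (𝕜 := ℂ) M x‖ = sMin M := by
  haveI := sphere_nonempty' hn
  have hc : IsCompact (Metric.sphere (0 : EuclideanSpace ℂ (Fin n)) 1) := isCompact_sphere _ _
  have hne : (Metric.sphere (0 : EuclideanSpace ℂ (Fin n)) 1).Nonempty := by
    refine ⟨EuclideanSpace.single ⟨0, hn⟩ 1, ?_⟩
    simp [EuclideanSpace.norm_single]
  obtain ⟨x, hx, hmin⟩ := hc.exists_isMinOn hne
    ((Matrix.toEuclideanCLM (𝕜 := ℂ) M).continuous.norm.continuousOn)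
  have hx1 : ‖x‖ = 1 := by simpa using hx
  refine ⟨x, hx1, le_antisymm ?_ (sMin_le M hx1)⟩
  exact le_ciInf fun y => hmin (by simpa using y.2)

/-- Pointwise formula for the resolvent-type matrix. -/
private lemma clm_M_apply (A : Matrix (Fin n) (Fin n) ℂ) (ω : ℝ)
    (x : EuclideanSpace ℂ (Fin n)) :
    Matrix.toEuclideanCLM (𝕜 := ℂ)
        ((Complex.I * (ω : ℂ)) • (1 : Matrix (Fin n) (Fin n) ℂ) - A) x
      = (Complex.I * (ω : ℂ)) • x - Matrix.toEuclideanCLM (𝕜 := ℂ) A x := by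
  simp only [map_sub, _root_.map_smul, _root_.map_one, ContinuousLinearMap.sub_apply,
    ContinuousLinearMap.coe_smul', Pi.smul_apply, ContinuousLinearMap.one_apply]

private lemma norm_I_smul (ω : ℝ) (x : EuclideanSpace ℂ (Fin n)) (hx : ‖x‖ = 1) :
    ‖(Complex.I * (ω : ℂ)) • x‖ = |ω| := by
  rw [norm_smul, hx, mul_one, norm_mul, Complex.norm_I, one_mul, Complex.norm_real,
    Real.norm_eq_abs]

end aux

/-- If all eigenvalues of `A` have negative real part, then there exists `B` with
`‖B‖ = r_c(A)` such that `A + B` has an eigenvalue with nonnegative real part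
(i.e. `ẋ = (A + B) x` is not asymptotically stable). -/
theorem exists_opNorm_eq_stabRadius_not_stable {n : ℕ} (hn : 0 < n)
    (A : Matrix (Fin n) (Fin n) ℂ)
    (hA : ∀ μ ∈ spectrum ℂ A, μ.re < 0) :
    ∃ B : Matrix (Fin n) (Fin n) ℂ, opNormC B = stabRadius A ∧
      ∃ μ ∈ spectrum ℂ (A + B), 0 ≤ μ.re := by
  classical
  haveI := sphere_nonempty' hn
  set E := EuclideanSpace ℂ (Fin n)
  set M : ℝ → Matrix (Fin n) (Fin n) ℂ :=
    fun ω => (Complex.I * (ω : ℂ)) • (1 : Matrix (Fin n) (Fin n) ℂ) - A with hM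
  set f : ℝ → ℝ := fun ω => sMin (M ω) with hf
  have hMapp : ∀ (ω : ℝ) (x : E), Matrix.toEuclideanCLM (𝕜 := ℂ) (M ω) x
      = (Complex.I * (ω : ℂ)) • x - Matrix.toEuclideanCLM (𝕜 := ℂ) A x :=
    fun ω x => clm_M_apply A ω x
  -- one-sided Lipschitz estimate
  have hlip1 : ∀ ω ω' : ℝ, f ω ≤ f ω' + |ω - ω'| := by
    intro ω ω'
    obtain ⟨x, hx1, hxv⟩ := exists_sMin hn (M ω')
    have hdiff : Matrix.toEuclideanCLM (𝕜 := ℂ) (M ω) x -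
        Matrix.toEuclideanCLM (𝕜 := ℂ) (M ω') x = (Complex.I * ((ω : ℂ) - ω')) • x := by
      rw [hMapp, hMapp, mul_sub, sub_smul]
      abel
    calc f ω ≤ ‖Matrix.toEuclideanCLM (𝕜 := ℂ) (M ω) x‖ := sMin_le _ hx1
      _ ≤ ‖Matrix.toEuclideanCLM (𝕜 := ℂ) (M ω') x‖ +
          ‖Matrix.toEuclideanCLM (𝕜 := ℂ) (M ω) x -
            Matrix.toEuclideanCLM (𝕜 := ℂ) (M ω') x‖ :=
            norm_le_norm_add_norm_sub' _ _
      _ = f ω' + |ω - ω'| := by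
          rw [hxv, hdiff, ← Complex.ofReal_sub, norm_I_smul _ _ hx1]
  have hcont : Continuous f := by
    have : LipschitzWith 1 f := by
      refine LipschitzWith.of_dist_le_mul fun ω ω' => ?_
      rw [Real.dist_eq, Real.dist_eq, NNReal.coe_one, one_mul, abs_sub_le_iff]
      constructor
      · linarith [hlip1 ω ω']
      · linarith [hlip1 ω' ω, abs_sub_comm ω ω']
    exact this.continuous
  -- coercivity
  have hcoer : ∀ ω : ℝ, |ω| - opNormC A ≤ f ω := by
    intro ω
    refine le_ciInf fun y => ?_
    obtain ⟨x, hx1⟩ := y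
    have h3 : ‖Matrix.toEuclideanCLM (𝕜 := ℂ) A x‖ ≤ opNormC A := by
      have h := (Matrix.toEuclideanCLM (𝕜 := ℂ) A).le_opNorm x
      rw [hx1, mul_one] at h
      exact h
    calc |ω| - opNormC A
        ≤ ‖(Complex.I * (ω : ℂ)) • x‖ - ‖Matrix.toEuclideanCLM (𝕜 := ℂ) A x‖ := by
          rw [norm_I_smul _ _ hx1]; linarith
      _ ≤ ‖(Complex.I * (ω : ℂ)) • x - Matrix.toEuclideanCLM (𝕜 := ℂ) A x‖ :=
          norm_sub_norm_le _ _
      _ = ‖Matrix.toEuclideanCLM (𝕜 := ℂ) (M ω) x‖ := by rw [hMapp]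
  -- the infimum is attained
  have htend : Filter.Tendsto f (Filter.cocompact ℝ) Filter.atTop := by
    refine Filter.tendsto_atTop_mono hcoer ?_
    have := tendsto_norm_cocompact_atTop (E := ℝ)
    replace this : Filter.Tendsto (fun ω : ℝ => |ω|) (Filter.cocompact ℝ) Filter.atTop :=
      this.congr fun ω => Real.norm_eq_abs ω
    exact Filter.tendsto_atTop_add_const_right _ _ this
  obtain ⟨ω₀, hω₀⟩ := hcont.exists_forall_le htend
  have hstab : stabRadius A = f ω₀ := by
    refine le_antisymm (ciInf_le ?_ ω₀) (le_ciInf hω₀)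
    exact ⟨0, by rintro _ ⟨ω, rfl⟩; exact sMin_nonneg _⟩
  -- construct B
  obtain ⟨x, hx1, hxv⟩ := exists_sMin hn (M ω₀)
  set v : E := Matrix.toEuclideanCLM (𝕜 := ℂ) (M ω₀) x with hv
  set B : Matrix (Fin n) (Fin n) ℂ := fun i j => v i * (starRingEnd ℂ) (x j) with hB
  have happ : ∀ y : E, Matrix.toEuclideanCLM (𝕜 := ℂ) B y
      = (inner ℂ x y : ℂ) • v := by
    intro y
    apply (WithLp.equiv 2 (Fin n → ℂ)).injective
    rw [WithLp.equiv_apply, Matrix.ofLp_toEuclideanCLM]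
    funext i
    show ∑ j, B i j * y j = ((inner ℂ x y : ℂ) • (WithLp.equiv 2 (Fin n → ℂ)) v) i
    simp only [PiLp.inner_apply, RCLike.inner_apply, Pi.smul_apply, smul_eq_mul, hB]
    show ∑ j, v i * (starRingEnd ℂ) (x j) * y j
        = (∑ j, y j * (starRingEnd ℂ) (x j)) * v i
    rw [Finset.sum_mul]
    exact Finset.sum_congr rfl fun j _ => by ring
  have hBx : Matrix.toEuclideanCLM (𝕜 := ℂ) B x = v := by
    rw [happ x]
    have : (inner ℂ x x : ℂ) = 1 := by
      rw [inner_self_eq_norm_sq_to_K, hx1]; norm_num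
    rw [this, one_smul]
  have hBnorm : opNormC B = ‖v‖ := by
    refine le_antisymm ?_ ?_
    · refine ContinuousLinearMap.opNorm_le_bound _ (norm_nonneg v) fun y => ?_
      rw [happ y, norm_smul]
      calc ‖(inner ℂ x y : ℂ)‖ * ‖v‖ ≤ ‖x‖ * ‖y‖ * ‖v‖ :=
            mul_le_mul_of_nonneg_right (norm_inner_le_norm x y) (norm_nonneg v)
        _ = ‖v‖ * ‖y‖ := by rw [hx1]; ring
    · calc ‖v‖ = ‖Matrix.toEuclideanCLM (𝕜 := ℂ) B x‖ := by rw [hBx]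
        _ ≤ opNormC B * ‖x‖ := (Matrix.toEuclideanCLM (𝕜 := ℂ) B).le_opNorm x
        _ = opNormC B := by rw [hx1, mul_one]
  -- the eigenvalue
  refine ⟨B, by rw [hBnorm, hxv, hstab], Complex.I * (ω₀ : ℂ), ?_, by simp⟩
  have heig : Matrix.toEuclideanCLM (𝕜 := ℂ) (A + B) x = (Complex.I * (ω₀ : ℂ)) • x := by
    rw [map_add]
    show Matrix.toEuclideanCLM (𝕜 := ℂ) A x + Matrix.toEuclideanCLM (𝕜 := ℂ) B x = _
    rw [hBx, hv, hMapp]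
    abel
  rw [spectrum.mem_iff]
  intro hu
  have hdet : IsUnit (algebraMap ℂ (Matrix (Fin n) (Fin n) ℂ) (Complex.I * (ω₀ : ℂ))
      - (A + B)).det := (Matrix.isUnit_iff_isUnit_det _).mp hu
  have hdet0 : (algebraMap ℂ (Matrix (Fin n) (Fin n) ℂ) (Complex.I * (ω₀ : ℂ))
      - (A + B)).det = 0 := by
    rw [← Matrix.exists_mulVec_eq_zero_iff]
    refine ⟨WithLp.equiv 2 (Fin n → ℂ) x, ?_, ?_⟩
    · intro h
      have hx0 : x = 0 := by
        apply (WithLp.equiv 2 (Fin n → ℂ)).injective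
        simpa using h
      rw [hx0] at hx1; simp at hx1
    · have hmv : (A + B).mulVec (WithLp.equiv 2 (Fin n → ℂ) x)
          = WithLp.equiv 2 (Fin n → ℂ) ((Complex.I * (ω₀ : ℂ)) • x) := by
        rw [WithLp.equiv_apply, WithLp.equiv_apply, ← Matrix.ofLp_toEuclideanCLM, heig]
      rw [Matrix.sub_mulVec, hmv]
      have halg : (algebraMap ℂ (Matrix (Fin n) (Fin n) ℂ) (Complex.I * (ω₀ : ℂ)))
          = (Complex.I * (ω₀ : ℂ)) • (1 : Matrix (Fin n) (Fin n) ℂ) :=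
        Algebra.algebraMap_eq_smul_one _
      rw [halg, Matrix.smul_mulVec, Matrix.one_mulVec]
      funext i
      simp [WithLp.ofLp_smul]
  rw [hdet0] at hdet
  exact (not_isUnit_zero : ¬ IsUnit (0 : ℂ)) hdet
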